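/- If the randomized algorithm 𝒜 is ε-DP on size-k subsets of 𝒟, then for every x* ∈ 𝒟 and every output A ∈ 𝔸, the joint probabilities satisfy k · P(x* ∉ D_train and 𝒜(D_train) = A) ≤ e^ε · (n − k) · P(x* ∈ D_train and 𝒜(D_train) = A). Equivalently, whenever P(𝒜(D_train) = A) > 0, the posterior odds satisfy P(x* ∉ D_train | 𝒜(D_train) = A) / P(x* ∈ D_train | 𝒜(D_train) = A) ≤ e^ε · P(x* ∉ D_train) / P(x* ∈ D_train) = e^ε · (n−k)/k. -/
import Mathlib


/-- Joint probability `P(x ∈ D_train ∧ 𝒜(D_train) = A)` for a uniform size-`k`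
training subset of `𝒟`. -/
noncomputable def jointIn {α 𝔸 : Type*} [DecidableEq α]
    (𝒟 : Finset α) (k : ℕ) (𝒜 : Finset α → 𝔸 → ℝ) (x : α) (A : 𝔸) : ℝ :=
  ((𝒟.powersetCard k).card : ℝ)⁻¹ *
    ∑ D ∈ (𝒟.powersetCard k).filter (fun D => x ∈ D), 𝒜 D A

/-- Joint probability `P(x ∉ D_train ∧ 𝒜(D_train) = A)`. -/
noncomputable def jointOut {α 𝔸 : Type*} [DecidableEq α]
    (𝒟 : Finset α) (k : ℕ) (𝒜 : Finset α → 𝔸 → ℝ) (x : α) (A : 𝔸) : ℝ :=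
  ((𝒟.powersetCard k).card : ℝ)⁻¹ *
    ∑ D ∈ (𝒟.powersetCard k).filter (fun D => x ∉ D), 𝒜 D A

/-- if `𝒜` is `ε`-DP on size-`k` subsets of `𝒟` then for every
`x* ∈ 𝒟` and every output `A`,
`k · P(x* ∉ D_train ∧ 𝒜 = A) ≤ e^ε · (n - k) · P(x* ∈ D_train ∧ 𝒜 = A)`;
equivalently, whenever `P(𝒜(D_train) = A) > 0`, the posterior odds satisfy
`P(x* ∉ D_train | A) / P(x* ∈ D_train | A) ≤ e^ε · (n - k)/k`. -/
theorem statement_7 {α 𝔸 : Type*} [DecidableEq α] [Fintype 𝔸]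
    (n k : ℕ) (hn : 2 ≤ n) (hk1 : 1 ≤ k) (hk2 : k ≤ n - 1)
    (𝒟 : Finset α) (hcard : 𝒟.card = n)
    (ε : ℝ)
    (𝒜 : Finset α → 𝔸 → ℝ)
    (h𝒜0 : ∀ D A, 0 ≤ 𝒜 D A)
    (h𝒜1 : ∀ D ∈ 𝒟.powersetCard k, ∑ A, 𝒜 D A = 1)
    (hDP : ∀ D ∈ 𝒟.powersetCard k, ∀ D' ∈ 𝒟.powersetCard k,
      (D ∩ D').card = k - 1 → ∀ A, 𝒜 D A ≤ Real.exp ε * 𝒜 D' A)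
    (x : α) (hx : x ∈ 𝒟) (A : 𝔸) :
    (k : ℝ) * jointOut 𝒟 k 𝒜 x A ≤
        Real.exp ε * ((n : ℝ) - k) * jointIn 𝒟 k 𝒜 x A ∧
      (0 < jointIn 𝒟 k 𝒜 x A + jointOut 𝒟 k 𝒜 x A →
        jointOut 𝒟 k 𝒜 x A / jointIn 𝒟 k 𝒜 x A ≤
          Real.exp ε * (((n : ℝ) - k) / k)) := by
  classical
  have hkn : k ≤ n := le_trans hk2 (Nat.sub_le n 1)
  set out := (𝒟.powersetCard k).filter (fun D => x ∉ D) with hout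
  set inn := (𝒟.powersetCard k).filter (fun D => x ∈ D) with hinn
  -- main sum inequality
  have key : (k:ℝ) * ∑ D ∈ out, 𝒜 D A ≤
      Real.exp ε * ((n:ℝ) - k) * ∑ D ∈ inn, 𝒜 D A := by
    have h1 : (k:ℝ) * ∑ D ∈ out, 𝒜 D A = ∑ D ∈ out, ∑ _y ∈ D, 𝒜 D A := by
      rw [Finset.mul_sum]
      refine Finset.sum_congr rfl fun D hD => ?_
      have hDk : D.card = k := by
        simp only [hout, Finset.mem_filter, Finset.mem_powersetCard] at hD
        exact hD.1.2
      rw [Finset.sum_const, nsmul_eq_mul, hDk]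
    have h2 : ∑ D ∈ out, ∑ y ∈ D, 𝒜 D A ≤
        ∑ D ∈ out, ∑ y ∈ D, Real.exp ε * 𝒜 (insert x (D.erase y)) A := by
      refine Finset.sum_le_sum fun D hD => Finset.sum_le_sum fun y hy => ?_
      simp only [hout, Finset.mem_filter, Finset.mem_powersetCard] at hD
      obtain ⟨⟨hDsub, hDk⟩, hxD⟩ := hD
      have hyx : y ≠ x := fun h => hxD (h ▸ hy)
      have hxe : x ∉ D.erase y := fun h => hxD (Finset.mem_of_mem_erase h)
      have hmem' : insert x (D.erase y) ∈ 𝒟.powersetCard k := by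
        rw [Finset.mem_powersetCard]
        constructor
        · intro z hz
          rcases Finset.mem_insert.mp hz with h | h
          · exact h ▸ hx
          · exact hDsub (Finset.mem_of_mem_erase h)
        · rw [Finset.card_insert_of_notMem hxe, Finset.card_erase_of_mem hy, hDk]
          omega
      have hmemD : D ∈ 𝒟.powersetCard k := Finset.mem_powersetCard.mpr ⟨hDsub, hDk⟩
      have hint : (D ∩ insert x (D.erase y)).card = k - 1 := by
        rw [Finset.inter_insert_of_notMem hxD,
          Finset.inter_eq_right.mpr (Finset.erase_subset y D),
          Finset.card_erase_of_mem hy, hDk]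
      exact hDP D hmemD _ hmem' hint A
    have h3 : ∑ D ∈ out, ∑ y ∈ D, 𝒜 (insert x (D.erase y)) A
        = ∑ D' ∈ inn, ∑ _z ∈ 𝒟 \ D', 𝒜 D' A := by
      rw [Finset.sum_sigma', Finset.sum_sigma']
      refine Finset.sum_bij' (fun p _ => ⟨insert x (p.1.erase p.2), p.2⟩)
        (fun q _ => ⟨insert q.2 (q.1.erase x), q.2⟩) ?_ ?_ ?_ ?_ ?_
      · rintro ⟨D, y⟩ hp
        simp only [Finset.mem_sigma, hout, Finset.mem_filter,
          Finset.mem_powersetCard] at hp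
        obtain ⟨⟨⟨hDsub, hDk⟩, hxD⟩, hy⟩ := hp
        have hyx : y ≠ x := fun h => hxD (h ▸ hy)
        have hxe : x ∉ D.erase y := fun h => hxD (Finset.mem_of_mem_erase h)
        refine Finset.mem_sigma.mpr ⟨?_, ?_⟩
        · rw [hinn]
          refine Finset.mem_filter.mpr ⟨Finset.mem_powersetCard.mpr ⟨?_, ?_⟩,
            Finset.mem_insert_self _ _⟩
          · intro z hz
            rcases Finset.mem_insert.mp hz with h | h
            · exact h ▸ hx
            · exact hDsub (Finset.mem_of_mem_erase h)
          · rw [Finset.card_insert_of_notMem hxe, Finset.card_erase_of_mem hy, hDk]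
            omega
        · refine Finset.mem_sdiff.mpr ⟨hDsub hy, ?_⟩
          intro h
          rcases Finset.mem_insert.mp h with h | h
          · exact hyx h
          · exact Finset.notMem_erase y D h
      · rintro ⟨D', z⟩ hq
        simp only [Finset.mem_sigma, hinn, Finset.mem_filter,
          Finset.mem_powersetCard, Finset.mem_sdiff] at hq ⊢
        obtain ⟨⟨⟨hDsub, hDk⟩, hxD⟩, hz, hzD⟩ := hq
        have hzx : z ≠ x := fun h => hzD (h ▸ hxD)
        have hze : z ∉ D'.erase x := fun h => hzD (Finset.mem_of_mem_erase h)
        refine ⟨?_, Finset.mem_insert_self _ _⟩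
        rw [hout]
        refine Finset.mem_filter.mpr ⟨Finset.mem_powersetCard.mpr ⟨?_, ?_⟩, ?_⟩
        · intro w hw
          rcases Finset.mem_insert.mp hw with h | h
          · exact h ▸ hz
          · exact hDsub (Finset.mem_of_mem_erase h)
        · rw [Finset.card_insert_of_notMem hze, Finset.card_erase_of_mem hxD, hDk]
          omega
        · intro h
          rcases Finset.mem_insert.mp h with h | h
          · exact hzx h.symm
          · exact Finset.notMem_erase x D' h
      · rintro ⟨D, y⟩ hp
        simp only [Finset.mem_sigma, hout, Finset.mem_filter,
          Finset.mem_powersetCard] at hp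
        obtain ⟨⟨⟨hDsub, hDk⟩, hxD⟩, hy⟩ := hp
        have hyx : y ≠ x := fun h => hxD (h ▸ hy)
        have hxe : x ∉ D.erase y := fun h => hxD (Finset.mem_of_mem_erase h)
        have : (insert x (D.erase y)).erase x = D.erase y :=
          Finset.erase_insert hxe
        simp only [this, Finset.insert_erase hy]
      · rintro ⟨D', z⟩ hq
        simp only [Finset.mem_sigma, hinn, Finset.mem_filter,
          Finset.mem_powersetCard, Finset.mem_sdiff] at hq
        obtain ⟨⟨⟨hDsub, hDk⟩, hxD⟩, hz, hzD⟩ := hq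
        have hze : z ∉ D'.erase x := fun h => hzD (Finset.mem_of_mem_erase h)
        have : (insert z (D'.erase x)).erase z = D'.erase x :=
          Finset.erase_insert hze
        simp only [this, Finset.insert_erase hxD]
      · rintro ⟨D, y⟩ hp
        rfl
    have h4 : ∑ D' ∈ inn, ∑ _z ∈ 𝒟 \ D', 𝒜 D' A
        = ((n:ℝ) - k) * ∑ D' ∈ inn, 𝒜 D' A := by
      rw [Finset.mul_sum]
      refine Finset.sum_congr rfl fun D' hD' => ?_
      simp only [hinn, Finset.mem_filter, Finset.mem_powersetCard] at hD'
      have : (𝒟 \ D').card = n - k := by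
        rw [Finset.card_sdiff_of_subset hD'.1.1, hcard, hD'.1.2]
      rw [Finset.sum_const, nsmul_eq_mul, this, Nat.cast_sub hkn]
    calc (k:ℝ) * ∑ D ∈ out, 𝒜 D A
        = ∑ D ∈ out, ∑ _y ∈ D, 𝒜 D A := h1
      _ ≤ ∑ D ∈ out, ∑ y ∈ D, Real.exp ε * 𝒜 (insert x (D.erase y)) A := h2
      _ = Real.exp ε * ∑ D ∈ out, ∑ y ∈ D, 𝒜 (insert x (D.erase y)) A := by
          rw [Finset.mul_sum]; refine Finset.sum_congr rfl fun D _ => ?_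
          rw [Finset.mul_sum]
      _ = Real.exp ε * (((n:ℝ) - k) * ∑ D' ∈ inn, 𝒜 D' A) := by rw [h3, h4]
      _ = Real.exp ε * ((n:ℝ) - k) * ∑ D' ∈ inn, 𝒜 D' A := by ring
  have hcinv : (0:ℝ) ≤ ((𝒟.powersetCard k).card : ℝ)⁻¹ := by positivity
  have hJout : jointOut 𝒟 k 𝒜 x A =
      ((𝒟.powersetCard k).card : ℝ)⁻¹ * ∑ D ∈ out, 𝒜 D A := rfl
  have hJin : jointIn 𝒟 k 𝒜 x A =
      ((𝒟.powersetCard k).card : ℝ)⁻¹ * ∑ D ∈ inn, 𝒜 D A := rfl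
  have main : (k : ℝ) * jointOut 𝒟 k 𝒜 x A ≤
      Real.exp ε * ((n : ℝ) - k) * jointIn 𝒟 k 𝒜 x A := by
    rw [hJout, hJin]
    have := mul_le_mul_of_nonneg_left key hcinv
    nlinarith [this]
  refine ⟨main, fun hpos => ?_⟩
  have hInpos : 0 ≤ jointIn 𝒟 k 𝒜 x A := by
    rw [hJin]
    exact mul_nonneg hcinv (Finset.sum_nonneg fun D _ => h𝒜0 D A)
  have hOutpos : 0 ≤ jointOut 𝒟 k 𝒜 x A := by
    rw [hJout]
    exact mul_nonneg hcinv (Finset.sum_nonneg fun D _ => h𝒜0 D A)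
  have hkpos : (0:ℝ) < k := by exact_mod_cast hk1
  have hIn : 0 < jointIn 𝒟 k 𝒜 x A := by
    rcases lt_or_eq_of_le hInpos with h | h
    · exact h
    · exfalso
      have hOut0 : 0 < jointOut 𝒟 k 𝒜 x A := by rw [← h] at hpos; linarith
      have hprod := mul_pos hkpos hOut0
      rw [← h] at main
      nlinarith [main, hprod]
  rw [div_le_iff₀ hIn,
    show Real.exp ε * (((n:ℝ) - k) / k) * jointIn 𝒟 k 𝒜 x A
      = (Real.exp ε * ((n:ℝ) - k) * jointIn 𝒟 k 𝒜 x A) / k from by ring,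
    le_div_iff₀ hkpos]
  nlinarith [main]
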